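/- Let σ be a labeled rooted forest on n vertices and let σ̃ be the labeled rooted tree on n+1 vertices obtained by connecting all roots of σ to a new root labeled n+1. Then the S_{n+1}-representation on the conjugation orbit of σ̃ is isomorphic to the induction from S_n × S_1 to S_{n+1} of the S_n-representation on the conjugation orbit of σ. -/

import Mathlib

/-- Iterate of a partial transformation on `Fin n`. -/
def iterPT {n : ℕ} (f : Fin n → Option (Fin n)) : ℕ → Fin n → Option (Fin n)
  | 0 => fun x => some x
  | k + 1 => fun x => (f x).bind (iterPT f k)

/-- A partial transformation is nilpotent iff its digraph has no directed cycle. -/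
def Nilp {n : ℕ} (f : Fin n → Option (Fin n)) : Prop :=
  ∀ (x : Fin n) (k : ℕ), 0 < k → iterPT f k x ≠ some x

/-- Cardinality of the domain of a partial transformation. -/
def domcard {n : ℕ} (f : Fin n → Option (Fin n)) : ℕ :=
  (Finset.univ.filter fun i => (f i).isSome).card

/-- Conjugation action of the symmetric group on partial transformations. -/
def conjPT {n : ℕ} (w : Equiv.Perm (Fin n)) (f : Fin n → Option (Fin n)) :
    Fin n → Option (Fin n) := fun x => (f (w⁻¹ x)).map w

/-- Attach all roots of a forest on `[n]` to a new root labeled `n+1`. -/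
def tildePT {n : ℕ} (f : Fin n → Option (Fin n)) : Fin (n+1) → Option (Fin (n+1)) :=
  fun x =>
    if h : x.val < n then
      match f ⟨x.val, h⟩ with
      | some j => some j.castSucc
      | none => some (Fin.last n)
    else none

section Aux

open Equiv

lemma conjPT_one {n : ℕ} (g : Fin n → Option (Fin n)) : conjPT 1 g = g := by
  funext x; simp [conjPT]

lemma conjPT_mul {n : ℕ} (u v : Equiv.Perm (Fin n)) (g : Fin n → Option (Fin n)) :
    conjPT (u * v) g = conjPT u (conjPT v g) := by
  funext x
  simp [conjPT, mul_inv_rev, Option.map_map, Function.comp_def]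

lemma tildePT_last {n : ℕ} (f : Fin n → Option (Fin n)) : tildePT f (Fin.last n) = none := by
  simp [tildePT]

lemma tildePT_castSucc {n : ℕ} (f : Fin n → Option (Fin n)) (z : Fin n) :
    tildePT f z.castSucc = some (((f z).map Fin.castSucc).getD (Fin.last n)) := by
  have h : (z.castSucc : Fin (n+1)).val < n := by simpa using z.isLt
  have hz : (⟨(z.castSucc : Fin (n+1)).val, h⟩ : Fin n) = z := by ext; simp
  unfold tildePT
  rw [dif_pos h, hz]
  cases f z <;> rfl

lemma tildePT_eq_none_iff {n : ℕ} (f : Fin n → Option (Fin n)) (x : Fin (n+1)) :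
    tildePT f x = none ↔ x = Fin.last n := by
  refine Fin.lastCases ?_ (fun i => ?_) x
  · simp [tildePT_last]
  · simp [tildePT_castSucc, (Fin.castSucc_lt_last i).ne]

lemma conjPT_tilde_none_iff {n : ℕ} (f : Fin n → Option (Fin n))
    (u : Equiv.Perm (Fin (n+1))) (x : Fin (n+1)) :
    conjPT u (tildePT f) x = none ↔ x = u (Fin.last n) := by
  simp only [conjPT, Option.map_eq_none_iff, tildePT_eq_none_iff]
  constructor
  · intro h; rw [← h]; simp
  · intro h; rw [h]; simp

/-- Extend a permutation of `Fin n` to `Fin (n+1)` fixing the last point. -/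
def extPerm {n : ℕ} (v' : Equiv.Perm (Fin n)) : Equiv.Perm (Fin (n+1)) :=
  ((finSuccEquivLast).trans (Equiv.optionCongr v')).trans (finSuccEquivLast).symm

lemma extPerm_last {n : ℕ} (v' : Equiv.Perm (Fin n)) : extPerm v' (Fin.last n) = Fin.last n := by
  simp [extPerm]

lemma extPerm_castSucc {n : ℕ} (v' : Equiv.Perm (Fin n)) (i : Fin n) :
    extPerm v' i.castSucc = (v' i).castSucc := by
  simp [extPerm]

lemma extPerm_inv_last {n : ℕ} (v' : Equiv.Perm (Fin n)) :
    (extPerm v')⁻¹ (Fin.last n) = Fin.last n := by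
  rw [Equiv.Perm.inv_eq_iff_eq, extPerm_last]

lemma extPerm_inv_castSucc {n : ℕ} (v' : Equiv.Perm (Fin n)) (i : Fin n) :
    (extPerm v')⁻¹ i.castSucc = (v'⁻¹ i).castSucc := by
  rw [Equiv.Perm.inv_eq_iff_eq, extPerm_castSucc]
  simp

lemma conjPT_extPerm {n : ℕ} (v' : Equiv.Perm (Fin n)) (f : Fin n → Option (Fin n)) :
    conjPT (extPerm v') (tildePT f) = tildePT (conjPT v' f) := by
  funext x
  refine Fin.lastCases ?_ (fun y => ?_) x
  · simp [conjPT, extPerm_inv_last, tildePT_last]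
  · simp only [conjPT, extPerm_inv_castSucc, tildePT_castSucc]
    cases hfz : f (v'⁻¹ y) <;> simp [extPerm_last, extPerm_castSucc]

/-- Restrict a permutation of `Fin (n+1)` fixing the last point to `Fin n`. -/
def restrictPerm {n : ℕ} (v : Equiv.Perm (Fin (n+1))) (h : v (Fin.last n) = Fin.last n) :
    Equiv.Perm (Fin n) where
  toFun i := (v i.castSucc).castPred (by
    intro he
    exact (Fin.castSucc_lt_last i).ne (v.injective (he.trans h.symm)))
  invFun i := (v⁻¹ i.castSucc).castPred (by
    intro he
    have : i.castSucc = Fin.last n := by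
      have := congrArg v he
      rwa [(show v (v⁻¹ i.castSucc) = i.castSucc from v.apply_symm_apply _), h] at this
    exact (Fin.castSucc_lt_last i).ne this)
  left_inv i := by
    ext
    simp [Fin.castSucc_castPred]
  right_inv i := by
    ext
    simp [Fin.castSucc_castPred]

lemma extPerm_restrictPerm {n : ℕ} (v : Equiv.Perm (Fin (n+1)))
    (h : v (Fin.last n) = Fin.last n) : extPerm (restrictPerm v h) = v := by
  ext x
  refine Fin.lastCases ?_ (fun i => ?_) x
  · rw [extPerm_last, h]
  · rw [extPerm_castSucc]
    simp [restrictPerm, Fin.castSucc_castPred]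

lemma card_last_eq {n : ℕ} (q : Fin (n+1)) :
    Nat.card {t : Equiv.Perm (Fin (n+1)) // t (Fin.last n) = q} =
    Nat.card {u : Equiv.Perm (Fin (n+1)) // u (Fin.last n) = Fin.last n} := by
  apply Nat.card_congr
  refine ⟨fun t => ⟨Equiv.swap (Fin.last n) q * t, by simp [t.2]⟩,
    fun u => ⟨Equiv.swap (Fin.last n) q * u, by simp [u.2]⟩, fun t => ?_, fun u => ?_⟩ <;>
  · ext1
    simp [← mul_assoc]

lemma step1 {n : ℕ} (f : Fin n → Option (Fin n)) (w t : Equiv.Perm (Fin (n+1))) :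
    (if (t⁻¹ * w * t) (Fin.last n) = Fin.last n then
      Nat.card {g : Fin (n+1) → Option (Fin (n+1)) //
        (∃ v : Equiv.Perm (Fin (n+1)), v (Fin.last n) = Fin.last n ∧
            conjPT v (tildePT f) = g) ∧
        conjPT (t⁻¹ * w * t) g = g}
    else 0)
    = Nat.card {g : Fin (n+1) → Option (Fin (n+1)) //
        ((∃ v : Equiv.Perm (Fin (n+1)), conjPT v (tildePT f) = g) ∧ conjPT w g = g) ∧
        g (t (Fin.last n)) = none} := by
  by_cases h : (t⁻¹ * w * t) (Fin.last n) = Fin.last n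
  · rw [if_pos h]
    apply Nat.card_congr
    refine ⟨fun p => ⟨conjPT t p.1, ?_⟩, fun p => ⟨conjPT t⁻¹ p.1, ?_⟩, fun p => ?_, fun p => ?_⟩
    · obtain ⟨⟨v, hv, hg⟩, hfix⟩ := p.2
      refine ⟨⟨⟨t * v, by rw [conjPT_mul, hg]⟩, ?_⟩, ?_⟩
      · have : conjPT w (conjPT t p.1) = conjPT t (conjPT (t⁻¹ * w * t) p.1) := by
          rw [← conjPT_mul, ← conjPT_mul]
          group
        rw [this, hfix]
      · have h1 : p.1 (Fin.last n) = none := by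
          rw [← hg, conjPT_tilde_none_iff, hv]
        simp [conjPT, h1]
    · obtain ⟨⟨⟨u, hu⟩, hfix⟩, hnone⟩ := p.2
      have htu : t (Fin.last n) = u (Fin.last n) := by
        rw [← hu] at hnone
        rwa [conjPT_tilde_none_iff] at hnone
      refine ⟨⟨t⁻¹ * u, ?_, by rw [conjPT_mul, hu]⟩, ?_⟩
      · simp [← htu]
      · have : conjPT (t⁻¹ * w * t) (conjPT t⁻¹ p.1) = conjPT t⁻¹ (conjPT w p.1) := by
          rw [← conjPT_mul, ← conjPT_mul]
          group
        rw [this, hfix]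
    · ext1
      simp only
      rw [← conjPT_mul, inv_mul_cancel, conjPT_one]
    · ext1
      simp only
      rw [← conjPT_mul, mul_inv_cancel, conjPT_one]
  · rw [if_neg h]
    symm
    rw [Nat.card_eq_zero]
    left
    constructor
    rintro ⟨g, ⟨⟨u, rfl⟩, hfix⟩, hnone⟩
    apply h
    have htu : t (Fin.last n) = u (Fin.last n) := by
      rwa [conjPT_tilde_none_iff] at hnone
    have hgul : conjPT u (tildePT f) (u (Fin.last n)) = none := by
      rw [conjPT_tilde_none_iff]
    have hw : w (u (Fin.last n)) = u (Fin.last n) := by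
      have h2 : conjPT u (tildePT f) (w (u (Fin.last n))) = none := by
        rw [← hfix]
        simp [conjPT, hgul, tildePT_last]
      rwa [conjPT_tilde_none_iff] at h2
    simp only [Equiv.Perm.mul_apply]
    rw [htu, hw, ← htu]
    simp

lemma sumpart {n : ℕ} (f : Fin n → Option (Fin n)) (w : Equiv.Perm (Fin (n+1))) :
    ∑ t : Equiv.Perm (Fin (n+1)),
      Nat.card {g : Fin (n+1) → Option (Fin (n+1)) //
        ((∃ v : Equiv.Perm (Fin (n+1)), conjPT v (tildePT f) = g) ∧ conjPT w g = g) ∧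
        g (t (Fin.last n)) = none}
    = Nat.card {u : Equiv.Perm (Fin (n+1)) // u (Fin.last n) = Fin.last n} *
      Nat.card {g : Fin (n+1) → Option (Fin (n+1)) //
        (∃ v : Equiv.Perm (Fin (n+1)), conjPT v (tildePT f) = g) ∧ conjPT w g = g} := by
  classical
  set P : (Fin (n+1) → Option (Fin (n+1))) → Prop := fun g =>
    (∃ v : Equiv.Perm (Fin (n+1)), conjPT v (tildePT f) = g) ∧ conjPT w g = g with hP
  have hcard : ∀ {α : Type} [Fintype α] (p : α → Prop) [DecidablePred p],
      Nat.card {x // p x} = (Finset.univ.filter p).card := by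
    intro α _ p _
    rw [Nat.card_eq_fintype_card, Fintype.card_subtype]
  calc
    ∑ t : Equiv.Perm (Fin (n+1)),
        Nat.card {g : Fin (n+1) → Option (Fin (n+1)) // P g ∧ g (t (Fin.last n)) = none}
      = ∑ t : Equiv.Perm (Fin (n+1)), ∑ g : Fin (n+1) → Option (Fin (n+1)),
          if P g ∧ g (t (Fin.last n)) = none then 1 else 0 := by
        refine Finset.sum_congr rfl fun t _ => ?_
        rw [hcard, Finset.card_filter]
    _ = ∑ g : Fin (n+1) → Option (Fin (n+1)), ∑ t : Equiv.Perm (Fin (n+1)),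
          if P g ∧ g (t (Fin.last n)) = none then 1 else 0 := Finset.sum_comm
    _ = ∑ g : Fin (n+1) → Option (Fin (n+1)),
          if P g then Nat.card {u : Equiv.Perm (Fin (n+1)) //
            u (Fin.last n) = Fin.last n} else 0 := by
        refine Finset.sum_congr rfl fun g _ => ?_
        by_cases hPg : P g
        · rw [if_pos hPg]
          obtain ⟨⟨u, hu⟩, -⟩ := id hPg
          have hiff : ∀ t : Equiv.Perm (Fin (n+1)),
              g (t (Fin.last n)) = none ↔ t (Fin.last n) = u (Fin.last n) := by
            intro t
            rw [← hu, conjPT_tilde_none_iff]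
          calc
            ∑ t : Equiv.Perm (Fin (n+1)),
                (if P g ∧ g (t (Fin.last n)) = none then 1 else 0)
              = ∑ t : Equiv.Perm (Fin (n+1)),
                  (if t (Fin.last n) = u (Fin.last n) then 1 else 0) := by
                refine Finset.sum_congr rfl fun t _ => ?_
                exact if_congr ((and_iff_right hPg).trans (hiff t)) rfl rfl
            _ = (Finset.univ.filter
                  (fun t : Equiv.Perm (Fin (n+1)) =>
                    t (Fin.last n) = u (Fin.last n))).card := (Finset.card_filter _ _).symm
            _ = Nat.card {t : Equiv.Perm (Fin (n+1)) //
                  t (Fin.last n) = u (Fin.last n)} := (hcard _).symm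
            _ = _ := card_last_eq _
        · simp [hPg]
    _ = (Finset.univ.filter P).card *
          Nat.card {u : Equiv.Perm (Fin (n+1)) // u (Fin.last n) = Fin.last n} := by
        rw [← Finset.sum_filter, Finset.sum_const, smul_eq_mul]
    _ = _ := by rw [← hcard, mul_comm]

end Aux

/-- for a labeled rooted forest `σ` (nilpotent `f`) on `n` vertices,
the `S_{n+1}`-representation on the conjugation orbit of `σ̃ = tildePT f` is
induced from the subgroup `S_n × S_1` (the stabilizer of the label `n+1`) acting
on its orbit of `σ̃`, which is a copy of the orbit `o(σ)`.  We state this as: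
(a) the `S_n × S_1`-orbit of `σ̃` is exactly `{τ̃ : τ ∈ o(σ)}`, and
(b) the character (fixed-point count) of the `S_{n+1}`-orbit equals the induced
character from `S_n × S_1`. -/
theorem stmt8 {n : ℕ} (f : Fin n → Option (Fin n)) (hf : Nilp f) :
    (∀ g : Fin (n+1) → Option (Fin (n+1)),
      (∃ v : Equiv.Perm (Fin (n+1)), v (Fin.last n) = Fin.last n ∧
          conjPT v (tildePT f) = g) ↔
      (∃ x : Fin n → Option (Fin n),
          (∃ v' : Equiv.Perm (Fin n), conjPT v' f = x) ∧ g = tildePT x)) ∧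
    ∀ w : Equiv.Perm (Fin (n+1)),
      Nat.card {u : Equiv.Perm (Fin (n+1)) // u (Fin.last n) = Fin.last n} *
        Nat.card {g : Fin (n+1) → Option (Fin (n+1)) //
          (∃ v : Equiv.Perm (Fin (n+1)), conjPT v (tildePT f) = g) ∧ conjPT w g = g} =
      ∑ t : Equiv.Perm (Fin (n+1)),
        if (t⁻¹ * w * t) (Fin.last n) = Fin.last n then
          Nat.card {g : Fin (n+1) → Option (Fin (n+1)) //
            (∃ v : Equiv.Perm (Fin (n+1)), v (Fin.last n) = Fin.last n ∧
                conjPT v (tildePT f) = g) ∧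
            conjPT (t⁻¹ * w * t) g = g}
        else 0 := by
  constructor
  · intro g
    constructor
    · rintro ⟨v, hv, rfl⟩
      exact ⟨conjPT (restrictPerm v hv) f, ⟨restrictPerm v hv, rfl⟩, by
        rw [← conjPT_extPerm, extPerm_restrictPerm]⟩
    · rintro ⟨x, ⟨v', rfl⟩, rfl⟩
      exact ⟨extPerm v', extPerm_last v', conjPT_extPerm v' f⟩
  · intro w
    rw [← sumpart f w]
    exact Finset.sum_congr rfl fun t _ => (step1 f w t).symm
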